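/- (Artin–Wedderburn for finite-dimensional von Neumann algebras) Let H be a finite-dimensional complex Hilbert space and A ⊆ L(H) a unital *-subalgebra. Then there exist finite families of finite-dimensional Hilbert spaces (H_L^k) and (H_R^k) and a unitary U : H → ⊕_k (H_L^k ⊗ H_R^k) such that U A U† = ⊕_k (L(H_L^k) ⊗ 1_{H_R^k}). -/

import Mathlib

open scoped BigOperators

open scoped InnerProductSpace
open Module

noncomputable section AW

namespace AW

variable {K : Type*} [NormedAddCommGroup K] [InnerProductSpace ℂ K] [FiniteDimensional ℂ K]

/-- Orthogonal projection as an endomorphism of the ambient space. -/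
def projL (V : Submodule ℂ K) : K →ₗ[ℂ] K :=
  V.subtype ∘ₗ (Submodule.orthogonalProjectionOnto V).toLinearMap

lemma projL_mem (V : Submodule ℂ K) (x : K) : projL V x ∈ V := (Submodule.orthogonalProjectionOnto V x).2

lemma projL_apply_mem (V : Submodule ℂ K) {x : K} (hx : x ∈ V) : projL V x = x :=
  Submodule.starProjection_eq_self_iff.2 hx

lemma projL_apply_orth (V : Submodule ℂ K) {x : K} (hx : x ∈ Vᗮ) : projL V x = 0 := by
  simp [projL, Submodule.orthogonalProjectionOnto_apply_of_mem_orthogonal hx]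

lemma sub_projL_mem_orth (V : Submodule ℂ K) (x : K) : x - projL V x ∈ Vᗮ :=
  Submodule.sub_starProjection_mem_orthogonal x

/-- The orthogonal complement of an invariant subspace is invariant under the adjoint. -/
lemma orth_invariant {V : Submodule ℂ K} {a : K →ₗ[ℂ] K}
    (hV : ∀ x ∈ V, (LinearMap.adjoint a) x ∈ V) : ∀ x ∈ Vᗮ, a x ∈ Vᗮ := by
  intro w hw
  rw [Submodule.mem_orthogonal]
  intro v hv
  rw [← LinearMap.adjoint_inner_left]
  exact hw _ (hV v hv)

lemma projL_comm {V : Submodule ℂ K} {a : K →ₗ[ℂ] K}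
    (hV : ∀ x ∈ V, a x ∈ V) (hV' : ∀ x ∈ V, (LinearMap.adjoint a) x ∈ V) :
    projL V ∘ₗ a = a ∘ₗ projL V := by
  ext x
  have h1 : a x = a (projL V x) + a (x - projL V x) := by
    rw [← map_add]; congr 1; abel
  have h2 : a (projL V x) ∈ V := hV _ (projL_mem V x)
  have h3 : a (x - projL V x) ∈ Vᗮ := orth_invariant hV' _ (sub_projL_mem_orth V x)
  simp only [LinearMap.comp_apply, h1, map_add, projL_apply_mem V h2,
    projL_apply_orth V h3, add_zero]

variable (A : StarSubalgebra ℂ (K →ₗ[ℂ] K))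

lemma star_mem_iff' {a : K →ₗ[ℂ] K} (ha : a ∈ A) : LinearMap.adjoint a ∈ A := by
  rw [← LinearMap.star_eq_adjoint]; exact star_mem ha

/-- Single-vector bicommutant lemma. -/
lemma exists_eq_on_vector (g : K →ₗ[ℂ] K)
    (hg : ∀ c : K →ₗ[ℂ] K, (∀ a ∈ A, c * a = a * c) → g * c = c * g) (x : K) :
    ∃ a ∈ A, g x = a x := by
  classical
  set V : Submodule ℂ K := Submodule.span ℂ ((fun a : K →ₗ[ℂ] K => a x) '' A) with hVdef
  have hform : ∀ y ∈ V, ∃ a ∈ A, y = a x := by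
    intro y hy
    induction hy using Submodule.span_induction with
    | mem y hy => obtain ⟨a, ha, rfl⟩ := hy; exact ⟨a, ha, rfl⟩
    | zero => exact ⟨0, zero_mem A, by simp⟩
    | add y z _ _ hy hz =>
        obtain ⟨a, ha, rfl⟩ := hy; obtain ⟨b, hb, rfl⟩ := hz
        exact ⟨a + b, add_mem ha hb, by simp⟩
    | smul c y _ hy =>
        obtain ⟨a, ha, rfl⟩ := hy
        exact ⟨c • a, SMulMemClass.smul_mem c ha, by simp⟩
  have hinv : ∀ b ∈ A, ∀ y ∈ V, b y ∈ V := by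
    intro b hb y hy
    obtain ⟨a, ha, rfl⟩ := hform y hy
    apply Submodule.subset_span
    exact ⟨b * a, mul_mem hb ha, rfl⟩
  have hx : x ∈ V := Submodule.subset_span ⟨1, one_mem A, by simp⟩
  have hcomm : ∀ a ∈ A, projL V * a = a * projL V := by
    intro a ha
    exact projL_comm (hinv a ha) (hinv _ (star_mem_iff' A ha))
  have := hg (projL V) hcomm
  have hgx : g x ∈ V := by
    have h1 : g (projL V x) = projL V (g x) := by
      have := congrArg (fun f : K →ₗ[ℂ] K => f x) this
      simpa using this
    rw [← projL_apply_mem V hx, h1]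
    exact projL_mem V _
  exact hform _ hgx

variable {K : Type*} [NormedAddCommGroup K] [InnerProductSpace ℂ K] [FiniteDimensional ℂ K] {m : ℕ}

def diagL (m : ℕ) (a : K →ₗ[ℂ] K) : PiLp 2 (fun _ : Fin m => K) →ₗ[ℂ] PiLp 2 (fun _ : Fin m => K) where
  toFun := fun x => WithLp.toLp 2 (fun i => a (x i))
  map_add' := fun x y => by ext i; simp [PiLp.add_apply]
  map_smul' := fun c x => by ext i; simp [PiLp.smul_apply]

def inclL (j : Fin m) : K →ₗ[ℂ] PiLp 2 (fun _ : Fin m => K) where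
  toFun := fun v => WithLp.toLp 2 (Pi.single j v)
  map_add' := fun x y => by ext i; by_cases h : i = j <;> simp [Pi.single_apply, h, PiLp.add_apply]
  map_smul' := fun c x => by ext i; by_cases h : i = j <;> simp [Pi.single_apply, h, PiLp.smul_apply]

def compL (i : Fin m) : PiLp 2 (fun _ : Fin m => K) →ₗ[ℂ] K where
  toFun := fun x => x i
  map_add' := fun _ _ => rfl
  map_smul' := fun _ _ => rfl

lemma diagL_adjoint (a : K →ₗ[ℂ] K) :
    LinearMap.adjoint (diagL m a) = diagL m (LinearMap.adjoint a) := by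
  symm
  rw [LinearMap.eq_adjoint_iff]
  intro x y
  rw [PiLp.inner_apply, PiLp.inner_apply]
  congr 1; ext i
  exact (LinearMap.adjoint_inner_left a (y i) (x i))

/-- The diagonal star algebra morphism. -/
def diagHom (m : ℕ) : (K →ₗ[ℂ] K) →⋆ₐ[ℂ]
    (PiLp 2 (fun _ : Fin m => K) →ₗ[ℂ] PiLp 2 (fun _ : Fin m => K)) where
  toFun := diagL m
  map_one' := by ext x i; rfl
  map_mul' := fun a b => by ext x i; rfl
  map_zero' := by ext x i; rfl
  map_add' := fun a b => by ext x i; rfl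
  commutes' := fun c => by
    ext x i
    simp [diagL, Algebra.algebraMap_eq_smul_one]
  map_star' := fun a => by
    rw [LinearMap.star_eq_adjoint, LinearMap.star_eq_adjoint, diagL_adjoint]

lemma diagL_single (a : K →ₗ[ℂ] K) (j : Fin m) (v : K) :
    diagL m a (inclL j v) = inclL j (a v) := by
  ext i
  simp only [diagL, inclL, LinearMap.coe_mk, AddHom.coe_mk]
  by_cases h : i = j
  · subst h; simp
  · simp [Pi.single_apply, h]

lemma sum_inclL (x : PiLp 2 (fun _ : Fin m => K)) :
    ∑ j : Fin m, inclL j (x j) = x := by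
  ext i
  have : (∑ j : Fin m, inclL j (x j)) i = ∑ j : Fin m, (inclL j (x j) : ∀ _ : Fin m, K) i := by
    classical
    induction (Finset.univ : Finset (Fin m)) using Finset.induction with
    | empty => rfl
    | insert _ _ h ih => rw [Finset.sum_insert h, Finset.sum_insert h, ← ih]; rfl
  rw [this]
  show (∑ j : Fin m, Pi.single j (x j) i) = x i
  simp [Pi.single_apply]

end AW
end AW
section BC
namespace AW2
open AW
variable {K : Type*} [NormedAddCommGroup K] [InnerProductSpace ℂ K] [FiniteDimensional ℂ K]
variable (A : StarSubalgebra ℂ (K →ₗ[ℂ] K))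

theorem mem_of_bicommutant (g : K →ₗ[ℂ] K)
    (hg : ∀ c : K →ₗ[ℂ] K, (∀ a ∈ A, c * a = a * c) → g * c = c * g) : g ∈ A := by
  classical
  set m := Module.finrank ℂ K with hm
  set v : Basis (Fin m) ℂ K := Module.finBasis ℂ K with hv
  set Ah := StarSubalgebra.map (diagHom m) A with hAh
  have hdiag : ∀ c, (∀ b ∈ Ah, c * b = b * c) → diagL m g * c = c * diagL m g := by
    intro c hc
    have hcd : ∀ a ∈ A, c * diagL m a = diagL m a * c := by
      intro a ha
      exact hc _ ⟨a, ha, rfl⟩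
    set cij : Fin m → Fin m → (K →ₗ[ℂ] K) :=
      fun i j => compL i ∘ₗ c ∘ₗ inclL j with hcij
    have hcijA : ∀ (i j : Fin m), ∀ a ∈ A, cij i j * a = a * cij i j := by
      intro i j a ha
      apply LinearMap.ext
      intro x
      show compL i (c (inclL j (a x))) = a (compL i (c (inclL j x)))
      rw [← diagL_single a j x]
      have h1 : c (diagL m a (inclL j x)) = diagL m a (c (inclL j x)) :=
        congrArg (fun f : _ →ₗ[ℂ] _ => f (inclL j x)) (hcd a ha)
      rw [h1]
      rfl
    have hgc : ∀ i j : Fin m, g * cij i j = cij i j * g := by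
      intro i j
      exact hg (cij i j) (hcijA i j)
    apply LinearMap.ext
    intro x
    have hxs : x = ∑ j : Fin m, inclL j (x j) := (sum_inclL x).symm
    ext i
    show g ((c x) i) = (c (diagL m g x)) i
    have hL : g ((c x) i) = ∑ j : Fin m, cij i j (g (x j)) := by
      conv_lhs => rw [hxs, map_sum]
      calc g ((∑ j : Fin m, c (inclL j (x j))) i)
          = g (compL i (∑ j : Fin m, c (inclL j (x j)))) := rfl
        _ = g (∑ j : Fin m, compL i (c (inclL j (x j)))) := by rw [map_sum]
        _ = ∑ j : Fin m, g (compL i (c (inclL j (x j)))) := by rw [map_sum]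
        _ = ∑ j : Fin m, cij i j (g (x j)) := by
              refine Finset.sum_congr rfl fun j _ => ?_
              exact congrArg (fun f : K →ₗ[ℂ] K => f (x j)) (hgc i j)
    have hR : (c (diagL m g x)) i = ∑ j : Fin m, cij i j (g (x j)) := by
      have hdx : diagL m g x = ∑ j : Fin m, inclL j (g (x j)) := by
        conv_lhs => rw [← sum_inclL (diagL m g x)]
        rfl
      rw [hdx, map_sum]
      calc (∑ j : Fin m, c (inclL j (g (x j)))) i
          = compL i (∑ j : Fin m, c (inclL j (g (x j)))) := rfl
        _ = ∑ j : Fin m, cij i j (g (x j)) := by rw [map_sum]; rfl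
    rw [hL, hR]
  obtain ⟨b, hb, hbx⟩ := AW.exists_eq_on_vector Ah (diagL m g) hdiag (WithLp.toLp 2 (fun i => v i))
  obtain ⟨a, ha, rfl⟩ := hb
  have : g = a := by
    apply v.ext
    intro i
    have := congrFun (congrArg (fun y : PiLp 2 (fun _ : Fin m => K) => (y : ∀ _ : Fin m, K)) hbx) i
    exact this
  exact this ▸ ha

end AW2
end BC

noncomputable section AW3
namespace AW3

variable {E : Type*} [NormedAddCommGroup E] [InnerProductSpace ℂ E] [FiniteDimensional ℂ E]
variable (A : StarSubalgebra ℂ (E →ₗ[ℂ] E))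

/-- Invariance of a subspace under all elements of `A`. -/
def Inv (V : Submodule ℂ E) : Prop := ∀ a ∈ A, ∀ x ∈ V, a x ∈ V

/-- Minimal (nonzero) invariant subspace. -/
def Minimal (V : Submodule ℂ E) : Prop :=
  Inv A V ∧ V ≠ ⊥ ∧ ∀ W ≤ V, Inv A W → W = ⊥ ∨ W = V

lemma inv_bot : Inv A ⊥ := by intro a _ x hx; simp_all

lemma inv_orth {V : Submodule ℂ E} (hV : Inv A V) : Inv A Vᗮ := by
  intro a ha w hw
  rw [Submodule.mem_orthogonal]
  intro v hv
  rw [← LinearMap.adjoint_inner_left]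
  exact hw _ (hV _ (by rw [← LinearMap.star_eq_adjoint]; exact star_mem ha) v hv)

lemma inv_inf {V W : Submodule ℂ E} (hV : Inv A V) (hW : Inv A W) : Inv A (V ⊓ W) :=
  fun a ha x hx => ⟨hV a ha x hx.1, hW a ha x hx.2⟩

lemma exists_minimal_le {W : Submodule ℂ E} (hW : Inv A W) (hne : W ≠ ⊥) :
    ∃ V ≤ W, Minimal A V := by
  classical
  set S : Set ℕ := {r | ∃ V : Submodule ℂ E, V ≤ W ∧ Inv A V ∧ V ≠ ⊥ ∧ finrank ℂ V = r} with hS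
  have hSne : S.Nonempty := ⟨finrank ℂ W, W, le_rfl, hW, hne, rfl⟩
  obtain ⟨r₀, hr₀S, hr₀min⟩ : ∃ r₀ ∈ S, ∀ r ∈ S, r₀ ≤ r := by
    exact ⟨Nat.find hSne, Nat.find_spec hSne, fun r hr => Nat.find_min' hSne hr⟩
  obtain ⟨V, hVW, hVinv, hVne, hVr⟩ := hr₀S
  refine ⟨V, hVW, hVinv, hVne, ?_⟩
  intro W' hW'V hW'inv
  by_cases hb : W' = ⊥
  · exact Or.inl hb
  · right
    have : finrank ℂ W' ∈ S := ⟨W', hW'V.trans hVW, hW'inv, hb, rfl⟩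
    have hge : r₀ ≤ finrank ℂ W' := hr₀min _ this
    exact Submodule.eq_of_le_of_finrank_le hW'V (by rw [hVr]; exact hge)

lemma iSup_fin_cons {n : ℕ} (V₀ : Submodule ℂ E) (V : Fin n → Submodule ℂ E) :
    (⨆ i : Fin (n + 1), Fin.cons V₀ V i) = V₀ ⊔ ⨆ i : Fin n, V i := by
  apply le_antisymm
  · apply iSup_le
    intro i
    induction i using Fin.cases with
    | zero => exact le_sup_left
    | succ j => exact le_sup_of_le_right (le_iSup V j)
  · apply sup_le
    · exact le_iSup_of_le 0 (by simp)
    · apply iSup_le; intro j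
      exact le_iSup_of_le j.succ (by simp)

lemma exists_decomp_aux : ∀ (n : ℕ) (W : Submodule ℂ E), Inv A W → finrank ℂ W ≤ n →
    ∃ (mm : ℕ) (V : Fin mm → Submodule ℂ E),
      (∀ i, Minimal A (V i)) ∧ (∀ i, V i ≤ W) ∧
      (∀ i j, i ≠ j → ∀ x ∈ V i, ∀ y ∈ V j, ⟪x, y⟫_ℂ = 0) ∧
      (⨆ i, V i) = W := by
  intro n
  induction n with
  | zero =>
      intro W _ hr
      have : W = ⊥ := by
        rw [← Submodule.finrank_eq_zero (S := W)]
        omega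
      exact ⟨0, Fin.elim0, fun i => i.elim0, fun i => i.elim0, fun i => i.elim0,
        by rw [iSup_of_empty]; exact this.symm⟩
  | succ n ih =>
      intro W hWinv hr
      by_cases hb : W = ⊥
      · exact ⟨0, Fin.elim0, fun i => i.elim0, fun i => i.elim0, fun i => i.elim0,
          by rw [iSup_of_empty]; exact hb.symm⟩
      obtain ⟨V₀, hV₀W, hV₀min⟩ := exists_minimal_le A hWinv hb
      set W₂ := V₀ᗮ ⊓ W with hW₂
      have hW₂inv : Inv A W₂ := inv_inf A (inv_orth A hV₀min.1) hWinv
      have hW₂le : W₂ ≤ V₀ᗮ := inf_le_left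
      have hsup : V₀ ⊔ W₂ = W := by
        apply le_antisymm (sup_le hV₀W inf_le_right)
        intro x hx
        rw [Submodule.mem_sup]
        refine ⟨(Submodule.orthogonalProjectionOnto V₀ x : E), (Submodule.orthogonalProjectionOnto V₀ x).2,
          x - (Submodule.orthogonalProjectionOnto V₀ x : E),
          ⟨Submodule.sub_starProjection_mem_orthogonal x,
            Submodule.sub_mem W hx (hV₀W (Submodule.orthogonalProjectionOnto V₀ x).2)⟩, by abel⟩
      have hinf : V₀ ⊓ W₂ = ⊥ := by
        apply le_antisymm _ bot_le
        refine le_trans ?_ (Submodule.orthogonal_disjoint V₀).le_bot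
        exact le_inf inf_le_left (le_trans inf_le_right inf_le_left)
      have hrank : finrank ℂ V₀ + finrank ℂ W₂ = finrank ℂ W := by
        have := Submodule.finrank_sup_add_finrank_inf_eq V₀ W₂
        rw [hsup, hinf] at this
        simpa using this.symm
      have hV₀pos : 0 < finrank ℂ V₀ := by
        rcases Nat.eq_zero_or_pos (finrank ℂ V₀) with h | h
        · exact absurd (Submodule.finrank_eq_zero.1 h) hV₀min.2.1
        · exact h
      obtain ⟨mm, V, hmin, hle, horth, hsup2⟩ := ih W₂ hW₂inv (by omega)
      refine ⟨mm + 1, Fin.cons V₀ V, ?_, ?_, ?_, ?_⟩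
      · intro i
        induction i using Fin.cases with
        | zero => exact hV₀min
        | succ j => exact hmin j
      · intro i
        induction i using Fin.cases with
        | zero => exact hV₀W
        | succ j => exact (hle j).trans inf_le_right
      · intro i j hij x hx y hy
        induction i using Fin.cases with
        | zero =>
            induction j using Fin.cases with
            | zero => exact absurd rfl hij
            | succ j' =>
                have : y ∈ V₀ᗮ := hW₂le ((hle j') hy)
                exact (Submodule.mem_orthogonal V₀ y).1 this x hx
        | succ i' =>
            induction j using Fin.cases with
            | zero =>
                have : x ∈ V₀ᗮ := hW₂le ((hle i') hx)
                rw [inner_eq_zero_symm]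
                exact (Submodule.mem_orthogonal V₀ x).1 this y hy
            | succ j' =>
                refine horth i' j' (fun hcon => hij (by rw [hcon])) x hx y hy
      · rw [iSup_fin_cons, hsup2, sup_comm] at *
        rw [← hsup, sup_comm]

end AW3
end AW3
noncomputable section AW4
namespace AW4
open AW3
variable {E : Type*} [NormedAddCommGroup E] [InnerProductSpace ℂ E] [FiniteDimensional ℂ E]
variable (A : StarSubalgebra ℂ (E →ₗ[ℂ] E))

/-- Equivariance of a map between invariant subspaces. -/
def Eqv {V W : Submodule ℂ E} (hV : Inv A V) (hW : Inv A W) (φ : V →ₗ[ℂ] W) : Prop :=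
  ∀ a (ha : a ∈ A), φ ∘ₗ a.restrict (hV a ha) = a.restrict (hW a ha) ∘ₗ φ

variable {A}

lemma eqv_apply {V W : Submodule ℂ E} {hV : Inv A V} {hW : Inv A W} {φ : V →ₗ[ℂ] W}
    (h : Eqv A hV hW φ) {a : E →ₗ[ℂ] E} (ha : a ∈ A) (x : V) :
    (φ (a.restrict (hV a ha) x) : E) = a (φ x : E) := by
  have := congrArg (fun f : V →ₗ[ℂ] W => ((f x : W) : E)) (h a ha)
  simpa [LinearMap.restrict_apply] using this

lemma eqv_sub {V W : Submodule ℂ E} {hV : Inv A V} {hW : Inv A W} {φ ψ : V →ₗ[ℂ] W}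
    (h : Eqv A hV hW φ) (h' : Eqv A hV hW ψ) : Eqv A hV hW (φ - ψ) := by
  intro a ha
  rw [LinearMap.sub_comp, LinearMap.comp_sub, h a ha, h' a ha]

lemma eqv_smul_id {V : Submodule ℂ E} {hV : Inv A V} (c : ℂ) :
    Eqv A hV hV (c • LinearMap.id) := by
  intro a ha
  ext x
  simp

lemma eqv_comp {V W X : Submodule ℂ E} {hV : Inv A V} {hW : Inv A W} {hX : Inv A X}
    {φ : V →ₗ[ℂ] W} {ψ : W →ₗ[ℂ] X} (h : Eqv A hV hW φ) (h' : Eqv A hW hX ψ) :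
    Eqv A hV hX (ψ ∘ₗ φ) := by
  intro a ha
  calc (ψ ∘ₗ φ) ∘ₗ a.restrict (hV a ha) = ψ ∘ₗ (φ ∘ₗ a.restrict (hV a ha)) := by
        rw [LinearMap.comp_assoc]
    _ = ψ ∘ₗ (a.restrict (hW a ha) ∘ₗ φ) := by rw [h a ha]
    _ = (ψ ∘ₗ a.restrict (hW a ha)) ∘ₗ φ := by rw [LinearMap.comp_assoc]
    _ = a.restrict (hX a ha) ∘ₗ (ψ ∘ₗ φ) := by rw [h' a ha, LinearMap.comp_assoc]

/-- Schur: an equivariant map between minimal invariant subspaces is zero or bijective. -/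
lemma schur_zero_or_bijective {V W : Submodule ℂ E} (hV : Minimal A V) (hW : Minimal A W)
    {φ : V →ₗ[ℂ] W} (h : Eqv A hV.1 hW.1 φ) : φ = 0 ∨ Function.Bijective φ := by
  classical
  by_cases hz : φ = 0
  · exact Or.inl hz
  right
  -- kernel
  set KE := Submodule.map V.subtype (LinearMap.ker φ) with hKE
  have hKEinv : Inv A KE := by
    rintro a ha x ⟨v, hv, rfl⟩
    refine ⟨a.restrict (hV.1 a ha) v, ?_, rfl⟩
    simp only [SetLike.mem_coe, LinearMap.mem_ker]
    have h2 := congrArg (fun f : V →ₗ[ℂ] W => f v) (h a ha)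
    simp only [LinearMap.comp_apply] at h2
    rw [h2]
    have h3 : φ v = 0 := hv
    rw [h3]
    simp
  have hKEle : KE ≤ V := Submodule.map_subtype_le V _
  have hker : LinearMap.ker φ = ⊥ := by
    rcases hV.2.2 KE hKEle hKEinv with hb | ht
    · rw [Submodule.eq_bot_iff]
      intro v hv
      have : (v : E) ∈ KE := ⟨v, hv, rfl⟩
      rw [hb] at this
      exact Subtype.ext (by simpa using this)
    · exfalso; apply hz
      ext v
      have : (v : E) ∈ KE := by rw [ht]; exact v.2
      obtain ⟨u, hu, huv⟩ := this
      have h4 : u = v := Subtype.ext huv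
      subst h4
      have h5 : φ u = 0 := hu
      simpa using h5
  -- range
  set RE := Submodule.map W.subtype (LinearMap.range φ) with hRE
  have hREinv : Inv A RE := by
    rintro a ha x ⟨w, ⟨v, rfl⟩, rfl⟩
    exact ⟨φ (a.restrict (hV.1 a ha) v), ⟨_, rfl⟩, (eqv_apply h ha v)⟩
  have hREle : RE ≤ W := Submodule.map_subtype_le W _
  have hrange : LinearMap.range φ = ⊤ := by
    rcases hW.2.2 RE hREle hREinv with hb | ht
    · exfalso; apply hz
      ext v
      have h6 : (φ v : E) ∈ RE := ⟨φ v, ⟨v, rfl⟩, rfl⟩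
      rw [hb] at h6
      have h7 : ((φ v : W) : E) = 0 := by simpa using h6
      simpa using h7
    · rw [LinearMap.range_eq_top]
      intro w
      have : (w : E) ∈ RE := by rw [ht]; exact w.2
      obtain ⟨u, ⟨v, rfl⟩, huv⟩ := this
      exact ⟨v, Subtype.ext huv⟩
  exact ⟨LinearMap.ker_eq_bot.1 hker, LinearMap.range_eq_top.1 hrange⟩

/-- Schur: an equivariant endomorphism of a minimal invariant subspace is scalar. -/
lemma schur_scalar {V : Submodule ℂ E} (hV : Minimal A V)
    {η : V →ₗ[ℂ] V} (h : Eqv A hV.1 hV.1 η) : ∃ c : ℂ, η = c • LinearMap.id := by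
  classical
  have : Nontrivial V := Submodule.nontrivial_iff_ne_bot.2 hV.2.1
  obtain ⟨c, hc⟩ := Module.End.exists_eigenvalue (η : Module.End ℂ V)
  obtain ⟨v, hv⟩ := hc.exists_hasEigenvector
  refine ⟨c, ?_⟩
  have heqv : Eqv A hV.1 hV.1 (η - c • LinearMap.id) := eqv_sub h (eqv_smul_id c)
  rcases schur_zero_or_bijective hV hV heqv with hz | hbij
  · exact sub_eq_zero.1 hz
  · exfalso
    have h8 : (η - c • (LinearMap.id : V →ₗ[ℂ] V)) v = 0 := by
      simp only [LinearMap.sub_apply, LinearMap.smul_apply, LinearMap.id_apply]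
      rw [hv.apply_eq_smul]
      simp
    have hv0 : v = 0 := by
      apply hbij.1
      rw [h8]
      simp
    exact hv.2 hv0

end AW4
end AW4
noncomputable section AW5
namespace AW5
open AW3 AW4
variable {E : Type*} [NormedAddCommGroup E] [InnerProductSpace ℂ E] [FiniteDimensional ℂ E]
variable {A : StarSubalgebra ℂ (E →ₗ[ℂ] E)}

lemma restrict_congr {V : Submodule ℂ E} {a b : E →ₗ[ℂ] E} (hab : a = b)
    (h : ∀ x ∈ V, a x ∈ V) (h' : ∀ x ∈ V, b x ∈ V) :
    a.restrict h = b.restrict h' := by subst hab; rfl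

lemma restrict_adjoint {V : Submodule ℂ E} (a : E →ₗ[ℂ] E)
    (hV : ∀ x ∈ V, a x ∈ V) (hV' : ∀ x ∈ V, (LinearMap.adjoint a) x ∈ V) :
    LinearMap.adjoint (a.restrict hV) = (LinearMap.adjoint a).restrict hV' := by
  symm
  rw [LinearMap.eq_adjoint_iff]
  intro x y
  rw [Submodule.coe_inner, Submodule.coe_inner]
  simp only [LinearMap.restrict_apply]
  exact LinearMap.adjoint_inner_left a _ _

lemma eqv_adjoint {V W : Submodule ℂ E} {hV : Inv A V} {hW : Inv A W}
    {φ : V →ₗ[ℂ] W} (h : Eqv A hV hW φ) : Eqv A hW hV (LinearMap.adjoint φ) := by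
  intro a ha
  have hsa : star a ∈ A := star_mem ha
  have h1 := h (star a) hsa
  have h2 := congrArg (fun f : V →ₗ[ℂ] W => LinearMap.adjoint f) h1
  simp only [LinearMap.adjoint_comp] at h2
  have hsaV : ∀ x ∈ V, (LinearMap.adjoint (star a)) x ∈ V := by
    intro x hx
    rw [LinearMap.star_eq_adjoint, LinearMap.adjoint_adjoint]
    exact hV a ha x hx
  have hsaW : ∀ x ∈ W, (LinearMap.adjoint (star a)) x ∈ W := by
    intro x hx
    rw [LinearMap.star_eq_adjoint, LinearMap.adjoint_adjoint]
    exact hW a ha x hx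
  rw [restrict_adjoint (star a) (hV (star a) hsa) hsaV,
      restrict_adjoint (star a) (hW (star a) hsa) hsaW] at h2
  have e1 : (LinearMap.adjoint (star a)).restrict hsaV = a.restrict (hV a ha) :=
    restrict_congr (by rw [LinearMap.star_eq_adjoint, LinearMap.adjoint_adjoint]) _ _
  have e2 : (LinearMap.adjoint (star a)).restrict hsaW = a.restrict (hW a ha) :=
    restrict_congr (by rw [LinearMap.star_eq_adjoint, LinearMap.adjoint_adjoint]) _ _
  rw [e1, e2] at h2
  exact h2.symm

lemma eqv_smul {V W : Submodule ℂ E} {hV : Inv A V} {hW : Inv A W}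
    {φ : V →ₗ[ℂ] W} (h : Eqv A hV hW φ) (c : ℂ) : Eqv A hV hW (c • φ) := by
  intro a ha
  rw [LinearMap.smul_comp, LinearMap.comp_smul, h a ha]

/-- Rescale an equivariant isomorphism to an equivariant isometry. -/
lemma exists_equivariant_isometry {V W : Submodule ℂ E} (hV : Minimal A V) (hW : Minimal A W)
    (φ : V →ₗ[ℂ] W) (hφ : Eqv A hV.1 hW.1 φ) (hbij : Function.Bijective φ) :
    ∃ ψ : V →ₗ[ℂ] W, Eqv A hV.1 hW.1 ψ ∧ Function.Surjective ψ ∧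
      ∀ x y : V, ⟪ψ x, ψ y⟫_ℂ = ⟪x, y⟫_ℂ := by
  classical
  have : Nontrivial V := Submodule.nontrivial_iff_ne_bot.2 hV.2.1
  have heta : Eqv A hV.1 hV.1 (LinearMap.adjoint φ ∘ₗ φ) := eqv_comp hφ (eqv_adjoint hφ)
  obtain ⟨c, hc⟩ := schur_scalar hV heta
  obtain ⟨v, hv⟩ := exists_ne (0 : V)
  have hip : ∀ x y : V, ⟪φ x, φ y⟫_ℂ = c * ⟪x, y⟫_ℂ := by
    intro x y
    calc ⟪φ x, φ y⟫_ℂ = ⟪x, LinearMap.adjoint φ (φ y)⟫_ℂ :=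
          (LinearMap.adjoint_inner_right φ _ _).symm
      _ = ⟪x, (LinearMap.adjoint φ ∘ₗ φ) y⟫_ℂ := rfl
      _ = ⟪x, c • y⟫_ℂ := by rw [hc]; rfl
      _ = c * ⟪x, y⟫_ℂ := inner_smul_right _ _ _
  have hφv : φ v ≠ 0 := fun h0 => hv (hbij.1 (by simp [h0]))
  have hip' := hip
  have h1 := hip v v
  rw [inner_self_eq_norm_sq_to_K, inner_self_eq_norm_sq_to_K] at h1
  clear hip
  obtain ⟨α, β, h1, hα, hβ⟩ : ∃ α β : ℝ, (α:ℂ)^2 = c * (β:ℂ)^2 ∧ α ≠ 0 ∧ β ≠ 0 :=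
    ⟨‖φ v‖, ‖v‖, h1, norm_ne_zero_iff.2 hφv, norm_ne_zero_iff.2 hv⟩
  have hαc : (α : ℂ) ≠ 0 := Complex.ofReal_ne_zero.2 hα
  have hβc : (β : ℂ) ≠ 0 := Complex.ofReal_ne_zero.2 hβ
  set t : ℝ := β / α with ht
  have htc : (t : ℂ) = (β : ℂ) / (α : ℂ) := by push_cast [ht]; ring
  have htne : (t : ℂ) ≠ 0 := by rw [htc]; exact div_ne_zero hβc hαc
  have hone : (t : ℂ)^2 * c = 1 := by
    rw [htc, div_pow, div_mul_eq_mul_div, div_eq_one_iff_eq (pow_ne_zero 2 hαc)]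
    linear_combination h1.symm
  refine ⟨(t : ℂ) • φ, eqv_smul hφ _, ?_, ?_⟩
  · intro w
    obtain ⟨u, hu⟩ := hbij.2 w
    refine ⟨(t : ℂ)⁻¹ • u, ?_⟩
    rw [LinearMap.smul_apply, map_smul, hu, smul_smul, mul_inv_cancel₀ htne, one_smul]
  · intro x y
    rw [LinearMap.smul_apply, LinearMap.smul_apply, inner_smul_left, inner_smul_right,
      hip' x y, Complex.conj_ofReal]
    calc (t:ℂ) * ((t:ℂ) * (c * ⟪x, y⟫_ℂ)) = ((t:ℂ)^2 * c) * ⟪x, y⟫_ℂ := by ring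
      _ = ⟪x, y⟫_ℂ := by rw [hone, one_mul]

lemma eqv_refl {V : Submodule ℂ E} (hV : Inv A V) : Eqv A hV hV LinearMap.id := by
  intro a ha
  ext x
  rfl

lemma eqv_symm {V W : Submodule ℂ E} {hV : Inv A V} {hW : Inv A W}
    {φ : V →ₗ[ℂ] W} (h : Eqv A hV hW φ) (hb : Function.Bijective φ) :
    ∃ φ' : W →ₗ[ℂ] V, Eqv A hW hV φ' ∧ Function.Bijective φ' ∧
      (∀ x, φ' (φ x) = x) ∧ (∀ y, φ (φ' y) = y) := by
  set e := LinearEquiv.ofBijective φ hb with he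
  refine ⟨e.symm.toLinearMap, ?_, e.symm.bijective, fun x => e.symm_apply_apply x,
    fun y => e.apply_symm_apply y⟩
  intro a ha
  have h1 : ∀ z : V, φ (a.restrict (hV a ha) z) = a.restrict (hW a ha) (φ z) := by
    intro z
    exact congrArg (fun f : V →ₗ[ℂ] W => f z) (h a ha)
  have hφsymm : ∀ w : W, φ (e.symm w) = w := fun w => e.apply_symm_apply w
  refine LinearMap.ext fun y => hb.1 ?_
  simp only [LinearMap.comp_apply, LinearEquiv.coe_coe]
  rw [hφsymm, h1, hφsymm]

/-- inner product with a member of `W` sees only the projection onto `W`. -/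
lemma inner_projL {W : Submodule ℂ E} (w : W) (y : E) :
    ⟪(w : E), y⟫_ℂ = ⟪w, Submodule.orthogonalProjectionOnto W y⟫_ℂ := by
  have h1 : y = (Submodule.orthogonalProjectionOnto W y : E) + (y - Submodule.orthogonalProjectionOnto W y) := by abel
  rw [Submodule.coe_inner]
  conv_lhs => rw [h1]
  rw [inner_add_right]
  have h2 : ⟪(w : E), y - (Submodule.orthogonalProjectionOnto W y : E)⟫_ℂ = 0 :=
    (Submodule.mem_orthogonal W _).1 (Submodule.sub_starProjection_mem_orthogonal y) (w : E) w.2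
  rw [h2, add_zero]

/-- Pointwise commutation of an `A`-commutant operator with orthogonal projections
onto invariant subspaces. -/
lemma proj_restrict_comm {W : Submodule ℂ E} (hW : Inv A W) {a : E →ₗ[ℂ] E} (ha : a ∈ A)
    (y : E) : (Submodule.orthogonalProjectionOnto W (a y) : E) = a (Submodule.orthogonalProjectionOnto W y : E) := by
  have h1 : a y = a (Submodule.orthogonalProjectionOnto W y : E) + a (y - Submodule.orthogonalProjectionOnto W y) := by
    rw [← map_add]; congr 1; abel
  have h2 : a (Submodule.orthogonalProjectionOnto W y : E) ∈ W := hW a ha _ (Submodule.orthogonalProjectionOnto W y).2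
  have h3 : a (y - Submodule.orthogonalProjectionOnto W y) ∈ Wᗮ :=
    inv_orth A hW a ha _ (Submodule.sub_starProjection_mem_orthogonal y)
  rw [h1, map_add, Submodule.coe_add,
    Submodule.orthogonalProjectionOnto_apply_of_mem_orthogonal h3]
  simp only [ZeroMemClass.coe_zero, add_zero]
  exact Submodule.starProjection_eq_self_iff.2 h2

end AW5
end AW5
noncomputable section AW6
namespace AW6
open AW3 AW4 AW5

def fTmap {n : ℕ} (dL dR : Fin n → ℕ) (T : ∀ k, Matrix (Fin (dL k)) (Fin (dL k)) ℂ) :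
    EuclideanSpace ℂ (Σ k : Fin n, Fin (dL k) × Fin (dR k)) →ₗ[ℂ]
      EuclideanSpace ℂ (Σ k : Fin n, Fin (dL k) × Fin (dR k)) where
  toFun x := WithLp.toLp 2 (fun i : (Σ k : Fin n, Fin (dL k) × Fin (dR k)) => ∑ a : Fin (dL i.1), T i.1 i.2.1 a * x ⟨i.1, a, i.2.2⟩)
  map_add' x y := WithLp.ofLp_injective 2 <| funext fun i => by
    simp only [WithLp.ofLp_toLp, WithLp.ofLp_add, Pi.add_apply, PiLp.add_apply, mul_add, Finset.sum_add_distrib]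
  map_smul' c x := WithLp.ofLp_injective 2 <| funext fun i => by
    simp only [WithLp.ofLp_toLp, WithLp.ofLp_smul, Pi.smul_apply, PiLp.smul_apply, smul_eq_mul, RingHom.id_apply, Finset.mul_sum]
    exact Finset.sum_congr rfl fun a _ => by ring

lemma fTmap_apply {n : ℕ} (dL dR : Fin n → ℕ) (T : ∀ k, Matrix (Fin (dL k)) (Fin (dL k)) ℂ)
    (x : EuclideanSpace ℂ (Σ k : Fin n, Fin (dL k) × Fin (dR k)))
    (i : Σ k : Fin n, Fin (dL k) × Fin (dR k)) :
    fTmap dL dR T x i = ∑ a : Fin (dL i.1), T i.1 i.2.1 a * x ⟨i.1, a, i.2.2⟩ := rfl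

lemma piLp_sum_apply {ι κ : Type*} (s : Finset κ) (f : κ → EuclideanSpace ℂ ι) (i : ι) :
    (∑ j ∈ s, f j) i = ∑ j ∈ s, f j i := by
  classical
  induction s using Finset.induction with
  | empty => rfl
  | insert _ _ h ih => rw [Finset.sum_insert h, Finset.sum_insert h, ← ih]; rfl

variable {E : Type*} [NormedAddCommGroup E] [InnerProductSpace ℂ E] [FiniteDimensional ℂ E]

theorem mem_of_bicommutant' (A : StarSubalgebra ℂ (E →ₗ[ℂ] E)) (g : E →ₗ[ℂ] E)
    (hg : ∀ c : E →ₗ[ℂ] E, (∀ a ∈ A, c * a = a * c) → g * c = c * g) : g ∈ A :=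
  AW2.mem_of_bicommutant A g hg

theorem main (A : StarSubalgebra ℂ (E →ₗ[ℂ] E)) :
    ∃ (n : ℕ) (dL dR : Fin n → ℕ)
      (U : E ≃ₗᵢ[ℂ] EuclideanSpace ℂ (Σ k : Fin n, Fin (dL k) × Fin (dR k))),
      ∀ f : EuclideanSpace ℂ (Σ k : Fin n, Fin (dL k) × Fin (dR k)) →ₗ[ℂ]
          EuclideanSpace ℂ (Σ k : Fin n, Fin (dL k) × Fin (dR k)),
        ((∃ M ∈ A, ∀ x : E, f (U x) = U (M x)) ↔
          ∃ T : ∀ k : Fin n, Matrix (Fin (dL k)) (Fin (dL k)) ℂ,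
            ∀ (x : EuclideanSpace ℂ (Σ k : Fin n, Fin (dL k) × Fin (dR k)))
              (i : Σ k : Fin n, Fin (dL k) × Fin (dR k)),
              f x i = ∑ a : Fin (dL i.1), T i.1 i.2.1 a * x ⟨i.1, a, i.2.2⟩) := by
  classical
  obtain ⟨mm, Vf, hmin, -, horth, hsupV⟩ :=
    exists_decomp_aux A (Module.finrank ℂ E) ⊤ (fun a _ x _ => Submodule.mem_top) (Submodule.finrank_le ⊤)
  set rel : Fin mm → Fin mm → Prop := fun i j =>
    ∃ φ : Vf i →ₗ[ℂ] Vf j, Eqv A (hmin i).1 (hmin j).1 φ ∧ Function.Bijective φ with hrel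
  have hequiv : Equivalence rel := by
    constructor
    · exact fun i => ⟨LinearMap.id, eqv_refl (hmin i).1, Function.bijective_id⟩
    · rintro i j ⟨φ, hφ, hb⟩
      obtain ⟨φ', h1, h2, -, -⟩ := eqv_symm hφ hb
      exact ⟨φ', h1, h2⟩
    · rintro i j l ⟨φ, hφ, hb⟩ ⟨φ', hφ', hb'⟩
      exact ⟨φ' ∘ₗ φ, eqv_comp hφ hφ', hb'.comp hb⟩
  set sd : Setoid (Fin mm) := ⟨rel, hequiv⟩ with hsd
  set n := Fintype.card (Quotient sd) with hn
  set eQ : Quotient sd ≃ Fin n := Fintype.equivFin _ with heQ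
  set out : Fin n → Fin mm := fun k => (eQ.symm k).out with hout
  set R : Fin n → Submodule ℂ E := fun k => Vf (out k) with hR
  set dL : Fin n → ℕ := fun k => Module.finrank ℂ (R k) with hdL
  set dR : Fin n → ℕ := fun k => Fintype.card {i : Fin mm // (⟦i⟧ : Quotient sd) = eQ.symm k}
    with hdR
  set je : (k : Fin n) → Fin (dR k) ≃ {i : Fin mm // (⟦i⟧ : Quotient sd) = eQ.symm k} :=
    fun k => (Fintype.equivFin _).symm with hje
  set ι : (k : Fin n) → Fin (dR k) → Fin mm := fun k j => (je k j).1 with hι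
  have hιcls : ∀ k j, (⟦ι k j⟧ : Quotient sd) = eQ.symm k := fun k j => (je k j).2
  have houtcls : ∀ k, (⟦out k⟧ : Quotient sd) = eQ.symm k := fun k => Quotient.out_eq _
  have hrel0 : ∀ k (j : Fin (dR k)), rel (out k) (ι k j) := by
    intro k j
    exact Quotient.exact ((houtcls k).trans (hιcls k j).symm)
  have hψex : ∀ k (j : Fin (dR k)), ∃ ψ : R k →ₗ[ℂ] Vf (ι k j),
      Eqv A (hmin (out k)).1 (hmin (ι k j)).1 ψ ∧ Function.Surjective ψ ∧
      ∀ x y : R k, ⟪ψ x, ψ y⟫_ℂ = ⟪x, y⟫_ℂ := by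
    intro k j
    obtain ⟨φ, hφ, hb⟩ := hrel0 k j
    exact exists_equivariant_isometry (hmin (out k)) (hmin (ι k j)) φ hφ hb
  choose ψ hψeqv hψsurj hψinn using hψex
  have hψinj : ∀ k j, Function.Injective (ψ k j) := by
    intro k j x y hxy
    have h0 : ψ k j (x - y) = 0 := by rw [map_sub, hxy, sub_self]
    have := hψinn k j (x - y) (x - y)
    rw [h0] at this
    simp only [inner_zero_left] at this
    have := inner_self_eq_zero.1 this.symm
    exact sub_eq_zero.1 this
  set stdb : (k : Fin n) → OrthonormalBasis (Fin (dL k)) ℂ (R k) :=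
    fun k => stdOrthonormalBasis ℂ (R k) with hstdb
  set ee : (Σ k : Fin n, Fin (dL k) × Fin (dR k)) → E :=
    fun s => (ψ s.1 s.2.2 (stdb s.1 s.2.1) : E) with hee
  -- injectivity of classes
  have hkinj : ∀ k k' (j : Fin (dR k)) (j' : Fin (dR k')), ι k j = ι k' j' → k = k' := by
    intro k k' j j' h
    have := (hιcls k j).symm.trans (h ▸ hιcls k' j')
    exact eQ.symm.injective this
  have hVmem : ∀ s : (Σ k : Fin n, Fin (dL k) × Fin (dR k)), ee s ∈ Vf (ι s.1 s.2.2) :=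
    fun s => (ψ s.1 s.2.2 (stdb s.1 s.2.1)).2
  have horthee : Orthonormal ℂ ee := by
    rw [orthonormal_iff_ite]
    rintro ⟨k, q, j⟩ ⟨k', q', j'⟩
    by_cases hv : ι k j = ι k' j'
    · have hkk : k = k' := hkinj k k' j j' hv
      subst hkk
      have hjj : j = j' := (je k).injective (Subtype.ext hv)
      subst hjj
      have h1 : ⟪ee ⟨k, q, j⟩, ee ⟨k, q', j⟩⟫_ℂ
          = ⟪ψ k j (stdb k q), ψ k j (stdb k q')⟫_ℂ := (Submodule.coe_inner _ _ _).symm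
      rw [h1, hψinn k j, orthonormal_iff_ite.1 (stdb k).orthonormal q q']
      by_cases hq : q = q'
      · subst hq; simp
      · rw [if_neg hq, if_neg (fun hcon => hq ?_)]
        obtain ⟨-, h2⟩ := Sigma.mk.inj_iff.1 hcon
        have h3 : (q, j) = (q', j) := eq_of_heq h2
        exact (Prod.mk.injEq _ _ _ _ ▸ h3).1
    · have h0 : ⟪ee ⟨k, q, j⟩, ee ⟨k', q', j'⟩⟫_ℂ = 0 :=
        horth _ _ hv _ (hVmem ⟨k, q, j⟩) _ (hVmem ⟨k', q', j'⟩)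
      rw [h0, if_neg]
      intro hcon
      apply hv
      obtain ⟨h1, h2⟩ := Sigma.mk.inj_iff.1 hcon
      subst h1
      have h3 : (q, j) = (q', j') := eq_of_heq h2
      have h4 : j = j' := (Prod.mk.injEq _ _ _ _ ▸ h3).2
      rw [h4]
  have hspan : ⊤ ≤ Submodule.span ℂ (Set.range ee) := by
    rw [← hsupV]
    apply iSup_le
    intro i x hx
    set k : Fin n := eQ ⟦i⟧ with hk
    have hcls : (⟦i⟧ : Quotient sd) = eQ.symm k := (eQ.symm_apply_apply _).symm
    set j : Fin (dR k) := (je k).symm ⟨i, hcls⟩ with hj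
    have hιkj : ι k j = i := by
      show ((je k) ((je k).symm ⟨i, hcls⟩)).1 = i
      rw [Equiv.apply_symm_apply]
    obtain ⟨y, hy⟩ := hψsurj k j ⟨x, by rw [hιkj]; exact hx⟩
    have hxy : x = (ψ k j y : E) := by rw [hy]
    have hyrep : y = ∑ p : Fin (dL k), (stdb k).repr y p • stdb k p :=
      ((stdb k).sum_repr y).symm
    rw [hxy, hyrep, map_sum]
    push_cast [Submodule.coe_sum]
    apply Submodule.sum_mem
    intro p _
    rw [map_smul]
    apply Submodule.smul_mem
    apply Submodule.subset_span
    exact ⟨⟨k, p, j⟩, rfl⟩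
  set B : OrthonormalBasis (Σ k : Fin n, Fin (dL k) × Fin (dR k)) ℂ E :=
    OrthonormalBasis.mk horthee hspan with hB
  have hBs : ∀ s, B s = ee s := fun s => by rw [hB, OrthonormalBasis.coe_mk]
  have hUee : ∀ s, B.repr (ee s) = EuclideanSpace.single s 1 := by
    intro s
    rw [← hBs s, OrthonormalBasis.repr_self]
  have ruleG : ∀ a : E →ₗ[ℂ] E, a ∈ A → ∀ (k : Fin n) (q : Fin (dL k)) (j : Fin (dR k)),
      a (ee ⟨k, q, j⟩) = ∑ p : Fin (dL k),
        ⟪((stdb k p : R k) : E), a ((stdb k q : R k) : E)⟫_ℂ • ee ⟨k, p, j⟩ := by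
    intro a ha k q j
    have h1 : a (ee ⟨k, q, j⟩)
        = (ψ k j ((a.restrict ((hmin (out k)).1 a ha)) (stdb k q)) : E) :=
      (eqv_apply (hψeqv k j) ha _).symm
    set z : R k := (a.restrict ((hmin (out k)).1 a ha)) (stdb k q) with hz
    have h2 : z = ∑ p : Fin (dL k), ⟪stdb k p, z⟫_ℂ • stdb k p := by
      conv_lhs => rw [← (stdb k).sum_repr z]
      exact Finset.sum_congr rfl fun p _ => by rw [(stdb k).repr_apply_apply]
    have h3 : ∀ p : Fin (dL k), ⟪stdb k p, z⟫_ℂ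
        = ⟪((stdb k p : R k) : E), a ((stdb k q : R k) : E)⟫_ℂ := by
      intro p
      rw [Submodule.coe_inner]
      congr 1
    rw [h1, h2, map_sum, Submodule.coe_sum]
    refine Finset.sum_congr rfl fun p _ => ?_
    rw [map_smul]
    push_cast
    rw [h3 p]
  have ruleC : ∀ c : E →ₗ[ℂ] E, (∀ a ∈ A, c * a = a * c) →
      ∃ S : (k : Fin n) → Fin (dR k) → Fin (dR k) → ℂ,
        ∀ (k : Fin n) (q : Fin (dL k)) (j : Fin (dR k)),
          c (ee ⟨k, q, j⟩) = ∑ j' : Fin (dR k), S k j' j • ee ⟨k, q, j'⟩ := by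
    intro c hc
    set PL : Fin mm → (E →ₗ[ℂ] E) :=
      fun i => (Vf i).subtype ∘ₗ (Submodule.orthogonalProjectionOnto (Vf i)).toLinearMap with hPL
    set pc : ∀ _ : Fin mm, ∀ _ : Fin mm, _ := fun (i i' : Fin mm) =>
      ((Submodule.orthogonalProjectionOnto (Vf i')).toLinearMap ∘ₗ (c ∘ₗ (Vf i).subtype) :
        Vf i →ₗ[ℂ] Vf i') with hpc
    have hccomm : ∀ a ∈ A, ∀ y : E, c (a y) = a (c y) := by
      intro a ha y
      exact congrArg (fun F : E →ₗ[ℂ] E => F y) (hc a ha)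
    have hpceqv : ∀ i i', Eqv A (hmin i).1 (hmin i').1 (pc i i') := by
      intro i i' a ha
      apply LinearMap.ext
      intro x
      apply Subtype.ext
      show (Submodule.orthogonalProjectionOnto (Vf i') (c (a (x : E))) : E)
          = a ((Submodule.orthogonalProjectionOnto (Vf i') (c (x : E)) : E))
      rw [hccomm a ha (x : E)]
      exact proj_restrict_comm (hmin i').1 ha (c (x : E))
    have hψbij : ∀ k (j : Fin (dR k)), Function.Bijective (ψ k j) :=
      fun k j => ⟨hψinj k j, hψsurj k j⟩
    have hψ'ex : ∀ k (j : Fin (dR k)), ∃ ψ'kj : Vf (ι k j) →ₗ[ℂ] R k,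
        Eqv A (hmin (ι k j)).1 (hmin (out k)).1 ψ'kj ∧ Function.Bijective ψ'kj ∧
        (∀ x, ψ'kj (ψ k j x) = x) ∧ (∀ y, ψ k j (ψ'kj y) = y) :=
      fun k j => eqv_symm (hψeqv k j) (hψbij k j)
    choose ψ' hψ'eqv hψ'bij hψ'li hψ'ri using hψ'ex
    have hθ : ∀ k (j j' : Fin (dR k)), ∃ lam : ℂ,
        (ψ' k j') ∘ₗ (pc (ι k j) (ι k j')) ∘ₗ (ψ k j) = lam • LinearMap.id :=
      fun k j j' => schur_scalar (hmin (out k))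
        (eqv_comp (eqv_comp (hψeqv k j) (hpceqv (ι k j) (ι k j'))) (hψ'eqv k j'))
    choose Sf hSf using hθ
    have hdiag : ∀ k (j j' : Fin (dR k)) (x : R k),
        pc (ι k j) (ι k j') (ψ k j x) = ψ k j' (Sf k j j' • x) := by
      intro k j j' x
      have h1 := congrArg (fun F : R k →ₗ[ℂ] R k => ψ k j' (F x)) (hSf k j j')
      simp only [LinearMap.comp_apply, LinearMap.smul_apply, LinearMap.id_apply] at h1
      rw [hψ'ri k j'] at h1
      exact h1
    have hcross : ∀ k k' (j : Fin (dR k)) (j' : Fin (dR k')), k ≠ k' →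
        ∀ x : R k, pc (ι k j) (ι k' j') (ψ k j x) = 0 := by
      intro k k' j j' hkk x
      have heqv := eqv_comp (eqv_comp (hψeqv k j) (hpceqv (ι k j) (ι k' j'))) (hψ'eqv k' j')
      rcases schur_zero_or_bijective (hmin (out k)) (hmin (out k')) heqv with h0 | hbij
      · have h1 : ψ' k' j' (pc (ι k j) (ι k' j') (ψ k j x)) = 0 := by
          have h2 := congrArg
            (fun F : R k →ₗ[ℂ] R k' => F x) h0
          simpa using h2
        calc pc (ι k j) (ι k' j') (ψ k j x)
            = ψ k' j' (ψ' k' j' (pc (ι k j) (ι k' j') (ψ k j x))) := (hψ'ri k' j' _).symm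
          _ = ψ k' j' 0 := by rw [h1]
          _ = 0 := map_zero _
      · exfalso
        have hrel' : rel (out k) (out k') := ⟨_, heqv, hbij⟩
        have h2 : (⟦out k⟧ : Quotient sd) = ⟦out k'⟧ := Quotient.sound hrel'
        rw [houtcls k, houtcls k'] at h2
        exact hkk (eQ.symm.injective h2)
    have hPLee : ∀ (i' : Fin mm) (s : Σ k : Fin n, Fin (dL k) × Fin (dR k)),
        PL i' (ee s) = if i' = ι s.1 s.2.2 then ee s else 0 := by
      intro i' s
      by_cases h : i' = ι s.1 s.2.2
      · subst h
        rw [if_pos rfl]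
        exact Submodule.starProjection_eq_self_iff.2 (hVmem s)
      · rw [if_neg h]
        have hmem : ee s ∈ (Vf i')ᗮ := by
          rw [Submodule.mem_orthogonal]
          intro u hu
          exact horth i' (ι s.1 s.2.2) h u hu (ee s) (hVmem s)
        show ((Submodule.orthogonalProjectionOnto (Vf i') (ee s) : Vf i') : E) = 0
        rw [Submodule.orthogonalProjectionOnto_apply_of_mem_orthogonal hmem]
        rfl
    have hPLsum : ∀ y : E, ∑ i' : Fin mm, PL i' y = y := by
      have hid : (∑ i' : Fin mm, PL i') = LinearMap.id := by
        apply B.toBasis.ext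
        intro s
        rw [OrthonormalBasis.coe_toBasis, hBs, LinearMap.sum_apply,
          Finset.sum_congr rfl (fun i' _ => hPLee i' s),
          Finset.sum_ite_eq' Finset.univ (ι s.1 s.2.2) (fun _ => ee s)]
        simp
      intro y
      have h3 := congrArg (fun F : E →ₗ[ℂ] E => F y) hid
      simpa [LinearMap.sum_apply] using h3
    have hbijι : Function.Bijective (fun s : Σ k : Fin n, Fin (dR k) => ι s.1 s.2) := by
      constructor
      · rintro ⟨k, j⟩ ⟨k', j'⟩ h
        have hk : k = k' := hkinj k k' j j' h
        subst hk
        have hj : j = j' := (je k).injective (Subtype.ext h)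
        rw [hj]
      · intro i
        have hcls : (⟦i⟧ : Quotient sd) = eQ.symm (eQ ⟦i⟧) := (eQ.symm_apply_apply _).symm
        refine ⟨⟨eQ ⟦i⟧, (je (eQ ⟦i⟧)).symm ⟨i, hcls⟩⟩, ?_⟩
        show ((je (eQ ⟦i⟧)) ((je (eQ ⟦i⟧)).symm ⟨i, hcls⟩)).1 = i
        rw [Equiv.apply_symm_apply]
    refine ⟨fun k j' j => Sf k j j', ?_⟩
    intro k q j
    have hterm0 : ∀ (k' : Fin n) (j' : Fin (dR k')),
        PL (ι k' j') (c (ee ⟨k, q, j⟩)) = (pc (ι k j) (ι k' j') (ψ k j (stdb k q)) : E) :=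
      fun k' j' => rfl
    have hzero : ∀ k' : Fin n, k' ≠ k →
        ∑ j' : Fin (dR k'), PL (ι k' j') (c (ee ⟨k, q, j⟩)) = 0 := by
      intro k' hk'
      apply Finset.sum_eq_zero
      intro j' _
      rw [hterm0 k' j', hcross k k' j j' (Ne.symm hk') (stdb k q)]
      rfl
    have hdiag2 : ∀ j' : Fin (dR k),
        PL (ι k j') (c (ee ⟨k, q, j⟩)) = Sf k j j' • ee ⟨k, q, j'⟩ := by
      intro j'
      rw [hterm0 k j', hdiag k j j' (stdb k q), map_smul]
      rfl
    calc c (ee ⟨k, q, j⟩) = ∑ i' : Fin mm, PL i' (c (ee ⟨k, q, j⟩)) := (hPLsum _).symm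
      _ = ∑ s : Σ k' : Fin n, Fin (dR k'), PL (ι s.1 s.2) (c (ee ⟨k, q, j⟩)) :=
          (Fintype.sum_bijective _ hbijι _ _ (fun s => rfl)).symm
      _ = ∑ k' : Fin n, ∑ j' : Fin (dR k'), PL (ι k' j') (c (ee ⟨k, q, j⟩)) := by
          rw [← Finset.univ_sigma_univ, Finset.sum_sigma]
      _ = ∑ j' : Fin (dR k), PL (ι k j') (c (ee ⟨k, q, j⟩)) :=
          Finset.sum_eq_single k (fun k' _ hk' => hzero k' hk')
            (fun h => absurd (Finset.mem_univ k) h)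
      _ = ∑ j' : Fin (dR k), Sf k j j' • ee ⟨k, q, j'⟩ :=
          Finset.sum_congr rfl fun j' _ => hdiag2 j'
  have key1 : ∀ (T : ∀ k : Fin n, Matrix (Fin (dL k)) (Fin (dL k)) ℂ)
      (k : Fin n) (q : Fin (dL k)) (j : Fin (dR k)),
      fTmap dL dR T (EuclideanSpace.single ⟨k, q, j⟩ 1) =
        ∑ p : Fin (dL k), T k p q • EuclideanSpace.single
          (⟨k, p, j⟩ : Σ k : Fin n, Fin (dL k) × Fin (dR k)) 1 := by
    intro T k q j
    ext i
    rw [piLp_sum_apply, fTmap_apply]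
    obtain ⟨k', p', j'⟩ := i
    by_cases hk : k' = k
    · subst hk
      by_cases hj : j' = j
      · subst hj
        simp only [EuclideanSpace.single_apply, PiLp.smul_apply, smul_eq_mul,
          Sigma.mk.inj_iff, heq_eq_eq, Prod.mk.injEq, true_and, and_true,
          mul_ite, mul_one, mul_zero]
        rw [Finset.sum_ite_eq' Finset.univ q (fun a => T k' p' a),
          Finset.sum_ite_eq Finset.univ p' (fun p => T k' p q)]
        simp
      · simp only [EuclideanSpace.single_apply, PiLp.smul_apply, smul_eq_mul,
          Sigma.mk.inj_iff, heq_eq_eq, Prod.mk.injEq, true_and, hj, and_false,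
          if_false, mul_zero, Finset.sum_const_zero]
    · simp only [EuclideanSpace.single_apply, PiLp.smul_apply, smul_eq_mul,
        Sigma.mk.inj_iff, hk, false_and, if_false, mul_zero, Finset.sum_const_zero]
  refine ⟨n, dL, dR, B.repr, ?_⟩
  intro f
  constructor
  · rintro ⟨M, hM, hfM⟩
    set T : ∀ k : Fin n, Matrix (Fin (dL k)) (Fin (dL k)) ℂ :=
      fun k p q => ⟪((stdb k p : R k) : E), M ((stdb k q : R k) : E)⟫_ℂ with hT
    have hf : f = fTmap dL dR T := by
      apply (EuclideanSpace.basisFun (Σ k : Fin n, Fin (dL k) × Fin (dR k)) ℂ).toBasis.ext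
      intro s
      obtain ⟨k, q, j⟩ := s
      rw [OrthonormalBasis.coe_toBasis]
      have hbf : (EuclideanSpace.basisFun (Σ k : Fin n, Fin (dL k) × Fin (dR k)) ℂ)
          ⟨k, q, j⟩ = EuclideanSpace.single ⟨k, q, j⟩ 1 := by
        simp [EuclideanSpace.basisFun_apply]
      rw [hbf, key1 T k q j, ← hUee ⟨k, q, j⟩, hfM, ruleG M hM k q j, map_sum]
      exact Finset.sum_congr rfl fun p _ => by rw [map_smul, hUee]
    refine ⟨T, fun x i => ?_⟩
    rw [hf]; rfl
  · rintro ⟨T, hT⟩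
    have hf : f = fTmap dL dR T := LinearMap.ext fun x => PiLp.ext fun i => hT x i
    set U := B.repr with hU
    set g : E →ₗ[ℂ] E :=
      (U.symm.toLinearEquiv : EuclideanSpace ℂ (Σ k : Fin n, Fin (dL k) × Fin (dR k)) ≃ₗ[ℂ] E).toLinearMap
        ∘ₗ (fTmap dL dR T) ∘ₗ (U.toLinearEquiv : E ≃ₗ[ℂ] _).toLinearMap with hg
    have hgapp : ∀ x : E, g x = U.symm (fTmap dL dR T (U x)) := fun x => rfl
    have key2 : ∀ (k : Fin n) (q : Fin (dL k)) (j : Fin (dR k)),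
        g (ee ⟨k, q, j⟩) = ∑ p : Fin (dL k), T k p q • ee ⟨k, p, j⟩ := by
      intro k q j
      rw [hgapp]
      show U.symm (fTmap dL dR T (U (ee ⟨k,q,j⟩))) = _
      rw [show U (ee ⟨k,q,j⟩) = EuclideanSpace.single ⟨k,q,j⟩ 1 from hUee _,
        key1 T k q j, map_sum]
      refine Finset.sum_congr rfl fun p _ => ?_
      rw [map_smul]
      congr 1
      rw [hU, OrthonormalBasis.repr_symm_single, hBs]
    have hcomm : ∀ c : E →ₗ[ℂ] E, (∀ a ∈ A, c * a = a * c) → g * c = c * g := by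
      intro c hc
      obtain ⟨S, hS⟩ := ruleC c hc
      have : g ∘ₗ c = c ∘ₗ g := by
        apply B.toBasis.ext
        intro s
        obtain ⟨k, q, j⟩ := s
        rw [OrthonormalBasis.coe_toBasis, hBs]
        simp only [LinearMap.comp_apply]
        rw [hS k q j, map_sum, key2 k q j, map_sum]
        have hL : ∀ j' : Fin (dR k), g (S k j' j • ee ⟨k, q, j'⟩)
            = ∑ p : Fin (dL k), (S k j' j * T k p q) • ee ⟨k, p, j'⟩ := by
          intro j'
          rw [map_smul, key2 k q j', Finset.smul_sum]
          exact Finset.sum_congr rfl fun p _ => by rw [smul_smul]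
        have hR2 : ∀ p : Fin (dL k), c (T k p q • ee ⟨k, p, j⟩)
            = ∑ j' : Fin (dR k), (T k p q * S k j' j) • ee ⟨k, p, j'⟩ := by
          intro p
          rw [map_smul, hS k p j, Finset.smul_sum]
          exact Finset.sum_congr rfl fun j' _ => by rw [smul_smul]
        rw [Finset.sum_congr rfl fun j' _ => hL j', Finset.sum_congr rfl fun p _ => hR2 p]
        rw [Finset.sum_comm]
        exact Finset.sum_congr rfl fun p _ => Finset.sum_congr rfl fun j' _ => by
          rw [mul_comm]
      exact this
    have hgA : g ∈ A := mem_of_bicommutant' A g hcomm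
    refine ⟨g, hgA, fun x => ?_⟩
    rw [hgapp, hf]
    exact (B.repr.apply_symm_apply _).symm

end AW6
end AW6

theorem artin_wedderburn_vonNeumann
    {E : Type*} [NormedAddCommGroup E] [InnerProductSpace ℂ E] [FiniteDimensional ℂ E]
    (A : StarSubalgebra ℂ (E →ₗ[ℂ] E)) :
    ∃ (n : ℕ) (dL dR : Fin n → ℕ)
      (U : E ≃ₗᵢ[ℂ] EuclideanSpace ℂ (Σ k : Fin n, Fin (dL k) × Fin (dR k))),
      ∀ f : EuclideanSpace ℂ (Σ k : Fin n, Fin (dL k) × Fin (dR k)) →ₗ[ℂ]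
          EuclideanSpace ℂ (Σ k : Fin n, Fin (dL k) × Fin (dR k)),
        ((∃ M ∈ A, ∀ x : E, f (U x) = U (M x)) ↔
          ∃ T : ∀ k : Fin n, Matrix (Fin (dL k)) (Fin (dL k)) ℂ,
            ∀ (x : EuclideanSpace ℂ (Σ k : Fin n, Fin (dL k) × Fin (dR k)))
              (i : Σ k : Fin n, Fin (dL k) × Fin (dR k)),
              f x i = ∑ a : Fin (dL i.1), T i.1 i.2.1 a * x ⟨i.1, a, i.2.2⟩) := by
  exact AW6.main A
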